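/- Let p be an odd prime, r ≥ 1, and suppose S = (v_1, v_2) is a sequence of units in Z/p^rZ such that the image of S in Z/pZ is not a Q_p-weighted zero-sum sequence. Then S has no S(p^r)*-weighted zero-sum subsequence. -/

import Mathlib

lemma keyDvd (p r : ℕ) (hp : p.Prime) (a b A B : ℕ) (hab : a ≤ b)
    (hA : ¬ p ∣ A) (ha : 2 * a < r)
    (hdvd : p ^ r ∣ p ^ (2 * a) * A + p ^ (2 * b) * B) :
    a = b ∧ p ∣ A + B := by
  have hsplit : p ^ (2 * b) = p ^ (2 * a) * p ^ (2 * (b - a)) := by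
    rw [← pow_add]; congr 1; omega
  have h1 : p ^ (2 * a) * p ∣ p ^ (2 * a) * (A + p ^ (2 * (b - a)) * B) := by
    calc p ^ (2 * a) * p ∣ p ^ r := by
          rw [← pow_succ]; exact pow_dvd_pow p (by omega)
      _ ∣ _ := by rw [mul_add, ← mul_assoc, ← hsplit]; exact hdvd
  have h2 : p ∣ A + p ^ (2 * (b - a)) * B :=
    (Nat.mul_dvd_mul_iff_left (pow_pos hp.pos _)).mp h1
  rcases Nat.lt_or_ge a b with h | h
  · exfalso
    apply hA
    have : p ∣ p ^ (2 * (b - a)) * B :=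
      Dvd.dvd.mul_right (dvd_pow_self p (by omega)) B
    exact (Nat.dvd_add_iff_left this).mpr h2
  · have hab' : a = b := le_antisymm hab h
    subst hab'
    simp only [Nat.sub_self, Nat.mul_zero, pow_zero, one_mul] at h2
    exact ⟨rfl, h2⟩

lemma pairAux (p r : ℕ) (hp : p.Prime) (hr : 1 ≤ r) (hdp : p ∣ p ^ r)
    (v0 v1 y0 y1 : ZMod (p ^ r)) (hv0 : IsUnit v0) (hv1 : IsUnit v1)
    (h0 : y0 ^ 2 ≠ 0) (h1 : y1 ^ 2 ≠ 0)
    (hab : (y0.val).factorization p ≤ (y1.val).factorization p)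
    (hsum : y0 ^ 2 * v0 + y1 ^ 2 * v1 = 0) :
    ∃ c0 c1 : ZMod p, IsUnit c0 ∧ IsUnit c1 ∧
      c0 ^ 2 * (ZMod.castHom hdp (ZMod p) v0) + c1 ^ 2 * (ZMod.castHom hdp (ZMod p) v1) = 0 := by
  haveI : Fact p.Prime := ⟨hp⟩
  haveI : NeZero (p ^ r) := ⟨pow_ne_zero r hp.pos.ne'⟩
  set Y0 := y0.val with hY0def
  set Y1 := y1.val with hY1def
  set V0 := v0.val with hV0def
  set V1 := v1.val with hV1def
  have castY0 : ((Y0 : ℕ) : ZMod (p ^ r)) = y0 := by rw [hY0def, ZMod.natCast_val, ZMod.cast_id]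
  have castY1 : ((Y1 : ℕ) : ZMod (p ^ r)) = y1 := by rw [hY1def, ZMod.natCast_val, ZMod.cast_id]
  have castV0 : ((V0 : ℕ) : ZMod (p ^ r)) = v0 := by rw [hV0def, ZMod.natCast_val, ZMod.cast_id]
  have castV1 : ((V1 : ℕ) : ZMod (p ^ r)) = v1 := by rw [hV1def, ZMod.natCast_val, ZMod.cast_id]
  have hY0ne : Y0 ≠ 0 := by
    intro h
    apply h0
    rw [← castY0, h]; simp
  have hY1ne : Y1 ≠ 0 := by
    intro h
    apply h1
    rw [← castY1, h]; simp
  -- p does not divide V0, V1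
  have hpV : ∀ u : ZMod (p ^ r), IsUnit u → ¬ p ∣ u.val := by
    rintro u ⟨w, rfl⟩ hdvd
    have hcop := (ZMod.val_coe_unit_coprime w).gcd_eq_one
    have hpd : p ∣ Nat.gcd ((w : ZMod (p ^ r)).val) (p ^ r) := Nat.dvd_gcd hdvd hdp
    rw [hcop] at hpd
    exact hp.ne_one (Nat.dvd_one.mp hpd)
  have hpV0 : ¬ p ∣ V0 := hpV v0 hv0
  have hpV1 : ¬ p ∣ V1 := hpV v1 hv1
  set a := Y0.factorization p with hadef
  set b := Y1.factorization p with hbdef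
  set U0 := Y0 / p ^ a with hU0def
  set U1 := Y1 / p ^ b with hU1def
  have hY0eq : p ^ a * U0 = Y0 := Nat.ordProj_mul_ordCompl_eq_self Y0 p
  have hY1eq : p ^ b * U1 = Y1 := Nat.ordProj_mul_ordCompl_eq_self Y1 p
  have hpU0 : ¬ p ∣ U0 := Nat.not_dvd_ordCompl hp hY0ne
  have hpU1 : ¬ p ∣ U1 := Nat.not_dvd_ordCompl hp hY1ne
  -- the big divisibility
  have hdvdsum : p ^ r ∣ Y0 ^ 2 * V0 + Y1 ^ 2 * V1 := by
    rw [← ZMod.natCast_eq_zero_iff]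
    push_cast
    rw [castY0, castY1, castV0, castV1]
    exact hsum
  have h2a : 2 * a < r := by
    by_contra h
    push_neg at h
    apply h0
    have : p ^ r ∣ Y0 ^ 2 := by
      calc p ^ r ∣ p ^ (2 * a) := pow_dvd_pow p h
        _ = (p ^ a) ^ 2 := by rw [← pow_mul, mul_comm]
        _ ∣ Y0 ^ 2 := pow_dvd_pow_of_dvd ⟨U0, hY0eq.symm⟩ 2
    have := (ZMod.natCast_eq_zero_iff (Y0 ^ 2) (p ^ r)).mpr this
    rw [← castY0]; push_cast at this ⊢; exact this
  have hrw : Y0 ^ 2 * V0 + Y1 ^ 2 * V1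
      = p ^ (2 * a) * (U0 ^ 2 * V0) + p ^ (2 * b) * (U1 ^ 2 * V1) := by
    rw [← hY0eq, ← hY1eq]; ring
  rw [hrw] at hdvdsum
  have hA : ¬ p ∣ U0 ^ 2 * V0 := by
    intro h
    rcases (hp.dvd_mul).mp h with h | h
    · exact hpU0 (hp.dvd_of_dvd_pow h)
    · exact hpV0 h
  obtain ⟨-, hfin⟩ := keyDvd p r hp a b (U0 ^ 2 * V0) (U1 ^ 2 * V1) hab hA h2a hdvdsum
  refine ⟨(U0 : ZMod p), (U1 : ZMod p), ?_, ?_, ?_⟩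
  · rw [isUnit_iff_ne_zero, Ne, ZMod.natCast_eq_zero_iff]
    exact hpU0
  · rw [isUnit_iff_ne_zero, Ne, ZMod.natCast_eq_zero_iff]
    exact hpU1
  · have hc0 : (ZMod.castHom hdp (ZMod p) v0) = ((V0 : ℕ) : ZMod p) := by
      rw [ZMod.castHom_apply, hV0def, ZMod.natCast_val]
    have hc1 : (ZMod.castHom hdp (ZMod p) v1) = ((V1 : ℕ) : ZMod p) := by
      rw [ZMod.castHom_apply, hV1def, ZMod.natCast_val]
    rw [hc0, hc1]
    have := (ZMod.natCast_eq_zero_iff (U0 ^ 2 * V0 + (U1 ^ 2 * V1)) p).mpr hfin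
    push_cast at this
    linear_combination this

/-- The set of squares of units of `ZMod n`. -/
def unitSquares (n : ℕ) : Set (ZMod n) :=
  {x | ∃ u : (ZMod n)ˣ, (u : ZMod n) ^ 2 = x}

/-- The set of nonzero squares of `ZMod n`. -/
def nonzeroSquares (n : ℕ) : Set (ZMod n) :=
  {x | x ≠ 0 ∧ ∃ y : ZMod n, y ^ 2 = x}

/-- A (nonempty) sequence is an `A`-weighted zero-sum sequence. -/
def IsWeightedZeroSum {n k : ℕ} (A : Set (ZMod n)) (x : Fin k → ZMod n) : Prop :=
  0 < k ∧ ∃ w : Fin k → ZMod n, (∀ i, w i ∈ A) ∧ ∑ i, w i * x i = 0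

/-- The sequence `x` has an `A`-weighted zero-sum subsequence. -/
def HasWZSSubseq {n k : ℕ} (A : Set (ZMod n)) (x : Fin k → ZMod n) : Prop :=
  ∃ I : Finset (Fin k), I.Nonempty ∧ ∃ w : Fin k → ZMod n,
    (∀ i ∈ I, w i ∈ A) ∧ ∑ i ∈ I, w i * x i = 0

/-- The sequence `x` has an `A`-weighted zero-sum subsequence of consecutive terms. -/
def HasConsecWZS {n k : ℕ} (A : Set (ZMod n)) (x : Fin k → ZMod n) : Prop :=
  ∃ i j : Fin k, i ≤ j ∧ ∃ w : Fin k → ZMod n,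
    (∀ t ∈ Finset.Icc i j, w t ∈ A) ∧ ∑ t ∈ Finset.Icc i j, w t * x t = 0

/-- `k` is admissible for the `A`-weighted Davenport constant of `ZMod n`. -/
def DConst (n : ℕ) (A : Set (ZMod n)) (k : ℕ) : Prop :=
  0 < k ∧ ∀ x : Fin k → ZMod n, HasWZSSubseq A x

/-- `k` is admissible for the constant `C_A` of `ZMod n`. -/
def CConst (n : ℕ) (A : Set (ZMod n)) (k : ℕ) : Prop :=
  0 < k ∧ ∀ x : Fin k → ZMod n, HasConsecWZS A x

theorem stmt15 (p : ℕ) (hp : p.Prime) (hodd : Odd p) (r : ℕ) (hr : 1 ≤ r)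
    (v : Fin 2 → ZMod (p ^ r)) (hv : ∀ i, IsUnit (v i))
    (hdp : p ∣ p ^ r)
    (hnz : ¬ IsWeightedZeroSum (unitSquares p)
      (fun i => ZMod.castHom hdp (ZMod p) (v i))) :
    ¬ HasWZSSubseq (nonzeroSquares (p ^ r)) v := by
  haveI : NeZero (p ^ r) := ⟨pow_ne_zero r hp.pos.ne'⟩
  rintro ⟨I, hIne, w, hw, hsum⟩
  have hI' : ∀ J : Finset (Fin 2), J.Nonempty → J = {0} ∨ J = {1} ∨ J = ({0, 1} : Finset (Fin 2)) := by
    decide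
  have hI := hI' I hIne
  have hsingle : ∀ i : Fin 2, w i ∈ nonzeroSquares (p ^ r) → w i * v i = 0 → False := by
    intro i hmem h
    exact hmem.1 (((hv i).mul_left_eq_zero).mp h)
  -- the pair case conclusion contradicts hnz
  have hpair : ∀ c0 c1 : ZMod p, IsUnit c0 → IsUnit c1 →
      c0 ^ 2 * (ZMod.castHom hdp (ZMod p) (v 0)) + c1 ^ 2 * (ZMod.castHom hdp (ZMod p) (v 1)) = 0
      → False := by
    intro c0 c1 hc0 hc1 heq
    apply hnz
    refine ⟨by norm_num, ![c0 ^ 2, c1 ^ 2], ?_, ?_⟩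
    · intro i
      fin_cases i
      · exact ⟨hc0.unit, by simp⟩
      · exact ⟨hc1.unit, by simp⟩
    · rw [Fin.sum_univ_two]
      simpa using heq
  rcases hI with rfl | rfl | rfl
  · rw [Finset.sum_singleton] at hsum
    exact hsingle 0 (hw 0 (by simp)) hsum
  · rw [Finset.sum_singleton] at hsum
    exact hsingle 1 (hw 1 (by simp)) hsum
  · rw [Finset.sum_pair (by decide : (0 : Fin 2) ≠ 1)] at hsum
    obtain ⟨hne0, y0, hy0⟩ := hw 0 (by simp)
    obtain ⟨hne1, y1, hy1⟩ := hw 1 (by simp)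
    rw [← hy0, ← hy1] at hsum
    have h0 : y0 ^ 2 ≠ 0 := hy0 ▸ hne0
    have h1 : y1 ^ 2 ≠ 0 := hy1 ▸ hne1
    rcases le_total ((y0.val).factorization p) ((y1.val).factorization p) with h | h
    · obtain ⟨c0, c1, hc0, hc1, heq⟩ :=
        pairAux p r hp hr hdp (v 0) (v 1) y0 y1 (hv 0) (hv 1) h0 h1 h hsum
      exact hpair c0 c1 hc0 hc1 heq
    · obtain ⟨c1, c0, hc1, hc0, heq⟩ :=
        pairAux p r hp hr hdp (v 1) (v 0) y1 y0 (hv 1) (hv 0) h1 h0 h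
          (by linear_combination hsum)
      exact hpair c0 c1 hc0 hc1 (by linear_combination heq)
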